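/- Let I=(0,1), 0<b<1, σ₁>0, σ₂<0 with |σ₂|/σ₁ = (1-b)/b. Let A: H¹₀(I) → H⁻¹(I) be defined by ⟨Au,v⟩ = ∫₀^b σ₁ u'v' + ∫_b^1 σ₂ u'v'. Then ker(A) = span{φ}, where φ(x)=x/b on (0,b) and φ(x)=(1-x)/(1-b) on (b,1). -/

import Mathlib

open MeasureTheory Set Real

noncomputable section

lemma integrable_mul2 {μ : Measure ℝ} {f g : ℝ → ℝ} (hf : MemLp f 2 μ) (hg : MemLp g 2 μ) :
    Integrable (fun x => f x * g x) μ := by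
  rw [← memLp_one_iff_integrable]
  exact hg.smul (r := 1) hf

lemma memLp_w {b σ₁ σ₂ : ℝ} {μ : Measure ℝ} {g : ℝ → ℝ} (hg : MemLp g 2 μ) :
    MemLp (fun x => (if x < b then σ₁ else σ₂) * g x) 2 μ := by
  refine MemLp.of_le (hg.const_mul (|σ₁| + |σ₂|))
    (((measurable_const.ite measurableSet_Iio measurable_const).aestronglyMeasurable).mul hg.1) ?_
  filter_upwards with x
  have hle : |(if x < b then σ₁ else σ₂)| ≤ |σ₁| + |σ₂| := by
    split_ifs
    · exact le_add_of_nonneg_right (abs_nonneg _)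
    · exact le_add_of_nonneg_left (abs_nonneg _)
  rw [norm_mul, norm_mul, Real.norm_eq_abs, Real.norm_eq_abs, Real.norm_eq_abs,
    abs_of_nonneg (by positivity : (0:ℝ) ≤ |σ₁| + |σ₂|)]
  exact mul_le_mul_of_nonneg_right hle (abs_nonneg _)

lemma split_int {b : ℝ} (hb0 : 0 < b) (hb1 : b < 1) {f : ℝ → ℝ}
    (hf : IntegrableOn f (Ioo 0 1) volume) :
    ∫ x in Ioo (0:ℝ) 1, f x = (∫ x in Ioo (0:ℝ) b, f x) + ∫ x in Ioo b 1, f x := by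
  have hu : Ioo (0:ℝ) b ∪ Ioo b 1 = Ioo 0 1 \ {b} := by
    ext x
    simp only [mem_union, mem_Ioo, mem_diff, mem_singleton_iff]
    constructor
    · rintro (⟨u1, u2⟩ | ⟨u1, u2⟩) <;>
        exact ⟨⟨by linarith, by linarith⟩, by intro hx; subst hx; linarith⟩
    · rintro ⟨⟨u1, u2⟩, u3⟩
      rcases lt_or_gt_of_ne u3 with h | h
      · exact Or.inl ⟨u1, h⟩
      · exact Or.inr ⟨h, u2⟩
  have hae : (Ioo (0:ℝ) b ∪ Ioo b 1 : Set ℝ) =ᵐ[volume] Ioo 0 1 := by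
    rw [hu]; exact diff_null_ae_eq_self volume_singleton
  rw [← setIntegral_congr_set hae,
    setIntegral_union (by rw [Set.disjoint_left]; intro x hx1 hx2; exact absurd hx2.1 (not_lt.2 hx1.2.le))
      measurableSet_Ioo (hf.mono_set (Ioo_subset_Ioo le_rfl hb1.le))
      (hf.mono_set (Ioo_subset_Ioo hb0.le le_rfl))]


/-- Membership in `H¹₀(0,1)`, represented through the weak derivative `g`. -/
def memH10 (g : ℝ → ℝ) : Prop :=
  MemLp g 2 (volume.restrict (Ioo (0:ℝ) 1)) ∧ (∫ t in Ioo (0:ℝ) 1, g t) = 0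

/-- The sign-changing bilinear form, expressed through weak derivatives. -/
def aform (b σ₁ σ₂ : ℝ) (g h : ℝ → ℝ) : ℝ :=
  (∫ x in Ioo (0:ℝ) b, σ₁ * g x * h x) + ∫ x in Ioo b 1, σ₂ * g x * h x

/-- Weak derivative of the interface profile `φ` (`φ(x)=x/b` on `(0,b)`,
`φ(x)=(1-x)/(1-b)` on `(b,1)`). -/
def phiDeriv (b : ℝ) (x : ℝ) : ℝ := if x < b then 1 / b else -(1 / (1 - b))

/-- In the critical contrast case `|σ₂|/σ₁ = (1-b)/b`, the kernel of the
operator `A` associated with the sign-changing form is spanned by `φ`. -/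
theorem stmt1 (b σ₁ σ₂ : ℝ) (hb : b ∈ Ioo (0:ℝ) 1) (h1 : 0 < σ₁) (h2 : σ₂ < 0)
    (hcrit : |σ₂| / σ₁ = (1 - b) / b) :
    ∀ g, memH10 g →
      ((∀ v, memH10 v → aform b σ₁ σ₂ g v = 0) ↔
        ∃ c : ℝ, g =ᵐ[volume.restrict (Ioo (0:ℝ) 1)] fun x => c * phiDeriv b x) := by
  obtain ⟨hb0, hb1⟩ := hb
  have hb1' : (0:ℝ) < 1 - b := by linarith
  have hσ : σ₂ * b = -(σ₁ * (1 - b)) := by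
    rw [abs_of_neg h2, div_eq_div_iff h1.ne' hb0.ne'] at hcrit
    linarith
  have hIf : IsFiniteMeasure (volume.restrict (Ioo (0:ℝ) 1)) :=
    ⟨by rw [Measure.restrict_apply_univ]; simp [Real.volume_Ioo]⟩
  have hkey : ∀ g v : ℝ → ℝ, MemLp g 2 (volume.restrict (Ioo (0:ℝ) 1)) →
      MemLp v 2 (volume.restrict (Ioo (0:ℝ) 1)) →
      aform b σ₁ σ₂ g v = ∫ x in Ioo (0:ℝ) 1, ((if x < b then σ₁ else σ₂) * g x) * v x := by
    intro g v hg hv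
    have hint : IntegrableOn (fun x => ((if x < b then σ₁ else σ₂) * g x) * v x)
        (Ioo (0:ℝ) 1) volume := integrable_mul2 (memLp_w hg) hv
    rw [split_int hb0 hb1 hint, aform]
    congr 1
    · refine setIntegral_congr_fun measurableSet_Ioo fun x hx => ?_
      simp [if_pos hx.2, mul_assoc]
    · refine setIntegral_congr_fun measurableSet_Ioo fun x hx => ?_
      simp [if_neg (not_lt.2 hx.1.le), mul_assoc]
  intro g hg
  constructor
  · intro h
    set w : ℝ → ℝ := fun x => (if x < b then σ₁ else σ₂) * g x with hw
    have hwm : MemLp w 2 (volume.restrict (Ioo (0:ℝ) 1)) := memLp_w hg.1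
    set m : ℝ := ∫ x in Ioo (0:ℝ) 1, w x with hm
    have hwint : Integrable w (volume.restrict (Ioo (0:ℝ) 1)) := hwm.integrable one_le_two
    have hv0m : MemLp (fun x => w x - m) 2 (volume.restrict (Ioo (0:ℝ) 1)) :=
      hwm.sub (memLp_const m)
    have hmeasval : (volume.restrict (Ioo (0:ℝ) 1)) univ = 1 := by
      rw [Measure.restrict_apply_univ]; simp [Real.volume_Ioo]
    have hv0int : (∫ x in Ioo (0:ℝ) 1, (w x - m)) = 0 := by
      rw [integral_sub hwint (integrable_const m), integral_const, measureReal_def, hmeasval]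
      simp [hm]
    have ha := h _ ⟨hv0m, hv0int⟩
    rw [hkey g _ hg.1 hv0m] at ha
    have hsq : (∫ x in Ioo (0:ℝ) 1, (w x - m) * (w x - m)) = 0 := by
      have e1 : ∀ x : ℝ, (w x - m) * (w x - m) = w x * (w x - m) - m * (w x - m) := by
        intro x; ring
      simp_rw [e1]
      rw [integral_sub (integrable_mul2 hwm hv0m)
          ((hv0m.integrable one_le_two).const_mul m), ha, integral_const_mul, hv0int]
      simp
    have hz : (fun x => (w x - m) * (w x - m)) =ᵐ[volume.restrict (Ioo (0:ℝ) 1)] 0 := by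
      rw [← integral_eq_zero_iff_of_nonneg (fun x => mul_self_nonneg _)
        (integrable_mul2 hv0m hv0m)]
      exact hsq
    have hwconst : ∀ᵐ x ∂(volume.restrict (Ioo (0:ℝ) 1)), w x = m := by
      filter_upwards [hz] with x hx
      have h0 : w x - m = 0 := by simpa [mul_self_eq_zero] using hx
      linarith
    refine ⟨m * b / σ₁, ?_⟩
    have hneb : ∀ᵐ x ∂(volume.restrict (Ioo (0:ℝ) 1)), x ≠ b := by
      refine ae_restrict_of_ae ?_
      rw [ae_iff]
      simp
    filter_upwards [hwconst, hneb] with x hwx hxb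
    rcases lt_or_gt_of_ne hxb with hlt | hgt
    · rw [hw] at hwx
      simp only [if_pos hlt] at hwx
      rw [phiDeriv, if_pos hlt]
      field_simp
      linear_combination hwx
    · rw [hw] at hwx
      simp only [if_neg (not_lt.2 hgt.le)] at hwx
      rw [phiDeriv, if_neg (not_lt.2 hgt.le)]
      have hσ2 : σ₂ ≠ 0 := h2.ne
      field_simp
      linear_combination g x * hσ - b * hwx
  · rintro ⟨c, hc⟩ v hv
    rw [hkey g v hg.1 hv.1]
    have hc' : (fun x => ((if x < b then σ₁ else σ₂) * g x) * v x)
        =ᵐ[volume.restrict (Ioo (0:ℝ) 1)]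
        (fun x => (σ₁ * c / b) * v x) := by
      filter_upwards [hc] with x hx
      rw [hx]
      by_cases hlt : x < b
      · simp only [if_pos hlt, phiDeriv]
        field_simp
      · simp only [if_neg hlt, phiDeriv]
        have hco : σ₂ * (c * -(1 / (1 - b))) = σ₁ * c / b := by
          field_simp
          linear_combination (-c) * hσ
        rw [hco]
    rw [integral_congr_ae hc', integral_const_mul, hv.2, mul_zero]


end
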